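/- Let N ≥ 1, p₁ ∈ ℂ, α ∈ ZMod N, and let u : ℤ → ℤ → ZMod N → ℂ and v : ℤ → ℤ → ZMod N → ℂ with v everywhere nonzero. Assume for all n, m ∈ ℤ and r ∈ ZMod N the Bäcklund relation p₁ + u n m (r+1+α) − u (n+1) m r = p₁ · (v (n+1) m r)/(v n m (r+α)), and assume ∏_{r ∈ ZMod N} v n m r = 1 for all n, m. Then for all n, m: ∏_{r ∈ ZMod N} (p₁ + u n m (r+1+α) − u (n+1) m r) = p₁^N. -/
import Mathlib


theorem additive_first_integral (N : ℕ) [NeZero N] (p₁ : ℂ) (α : ZMod N)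
    (u v : ℤ → ℤ → ZMod N → ℂ)
    (hv : ∀ n m r, v n m r ≠ 0)
    (hBT : ∀ (n m : ℤ) (r : ZMod N),
      p₁ + u n m (r + 1 + α) - u (n+1) m r = p₁ * (v (n+1) m r) / (v n m (r + α)))
    (hprod : ∀ (n m : ℤ), ∏ r : ZMod N, v n m r = 1) :
    ∀ (n m : ℤ), ∏ r : ZMod N, (p₁ + u n m (r + 1 + α) - u (n+1) m r) = p₁ ^ N := by
  intro n m
  have hshift : ∏ r : ZMod N, v n m (r + α) = 1 := by
    rw [← hprod n m]
    exact Fintype.prod_equiv (Equiv.addRight α) _ (v n m) (fun r => rfl)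
  calc ∏ r : ZMod N, (p₁ + u n m (r + 1 + α) - u (n+1) m r)
      = ∏ r : ZMod N, p₁ * (v (n+1) m r) / (v n m (r + α)) := by
        exact Finset.prod_congr rfl fun r _ => hBT n m r
    _ = p₁ ^ N := by
        simp only [mul_div_assoc, Finset.prod_mul_distrib, Finset.prod_const,
          Finset.card_univ, ZMod.card, Finset.prod_div_distrib, hprod, hshift]
        simp
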